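/- (Proposition 3, grid form.) Let P ⊆ ℤ² be a finite set whose proximity graph is connected, let p ∈ P, and let q ∉ P. Suppose that every r ∈ P \ {p} that is linked to p (Chebyshev distance from r to p equals 1) is also linked to q (Chebyshev distance from r to q equals 1). Then the proximity graph of the configuration (P \ {p}) ∪ {q} is connected. -/

import Mathlib

/-- Chebyshev distance on the grid `ℤ²`. -/
def chebDist (p q : ℤ × ℤ) : ℤ := max |p.1 - q.1| |p.2 - q.2|

/-- The proximity graph of a configuration `P ⊆ ℤ²`: two occupied grid points are
adjacent iff their Chebyshev distance is `1` (Moore neighborhood). -/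
def proxGraph (P : Set (ℤ × ℤ)) : SimpleGraph P where
  Adj a b := chebDist a.1 b.1 = 1
  symm := by
    constructor
    intro a b h
    unfold chebDist at *
    rw [abs_sub_comm (b.1).1 (a.1).1, abs_sub_comm (b.1).2 (a.1).2]
    exact h
  loopless := by
    constructor
    intro a h
    simp [chebDist] at h

/-- Proposition 3 (grid form): relocating one agent from `p` to an unoccupied point `q`
that remains linked to all of `p`'s prior neighbors preserves connectivity of the
proximity graph. -/
theorem connected_after_move_grid
    (P : Set (ℤ × ℤ)) (hfin : P.Finite)
    (hconn : (proxGraph P).Connected)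
    (p : ℤ × ℤ) (hp : p ∈ P) (q : ℤ × ℤ) (hq : q ∉ P)
    (hkeep : ∀ r ∈ P \ {p}, chebDist r p = 1 → chebDist r q = 1) :
    (proxGraph ((P \ {p}) ∪ {q})).Connected := by
  classical
  set P' : Set (ℤ × ℤ) := (P \ {p}) ∪ {q} with hP'
  have hqP' : q ∈ P' := Or.inr rfl
  have hmem : ∀ x : ℤ × ℤ, x ∈ P → x ≠ p → x ∈ P' := fun x hx hxp => Or.inl ⟨hx, hxp⟩
  have key : ∀ (a b : P), (proxGraph P).Walk a b → (b : ℤ × ℤ) = p →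
      ∀ (ha : (a : ℤ × ℤ) ≠ p),
        (proxGraph P').Reachable ⟨a, hmem a a.2 ha⟩ ⟨q, hqP'⟩ := by
    intro a b w
    induction w with
    | nil =>
      intro hb ha
      exact absurd hb ha
    | @cons u v c h w ih =>
      intro hb ha
      by_cases hv : (v : ℤ × ℤ) = p
      · have hadj : chebDist (u : ℤ × ℤ) p = 1 := by
          rw [← hv]; exact h
        have h2 : chebDist (u : ℤ × ℤ) q = 1 := hkeep u ⟨u.2, ha⟩ hadj
        exact SimpleGraph.Adj.reachable
          (show (proxGraph P').Adj ⟨u, hmem u u.2 ha⟩ ⟨q, hqP'⟩ from h2)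
      · have h1 : (proxGraph P').Adj ⟨u, hmem u u.2 ha⟩ ⟨v, hmem v v.2 hv⟩ := h
        exact (SimpleGraph.Adj.reachable h1).trans (ih hb hv)
  have toq : ∀ x : P', (proxGraph P').Reachable x ⟨q, hqP'⟩ := by
    intro x
    by_cases hxq : (x : ℤ × ℤ) = q
    · have : x = ⟨q, hqP'⟩ := Subtype.ext hxq
      rw [this]
    · have hxP : (x : ℤ × ℤ) ∈ P \ {p} := by
        rcases x.2 with h | h
        · exact h
        · exact absurd h hxq
      have hxp : (x : ℤ × ℤ) ≠ p := hxP.2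
      obtain ⟨w⟩ := hconn.preconnected ⟨x, hxP.1⟩ ⟨p, hp⟩
      have := key ⟨x, hxP.1⟩ ⟨p, hp⟩ w rfl hxp
      convert this using 2
  have : Nonempty P' := ⟨⟨q, hqP'⟩⟩
  exact ⟨fun x y => (toq x).trans (toq y).symm⟩
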